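/- Let f : ℕ → ℝ be any total function. The class K₂ = { x infinite word | g_x = O(f) }, where g_x(n) = Σ_{i=0}^n f_x(i) is the growth function of x, is machine invariant: if x ∈ K₂ and some initial Mealy machine transforms x to y, then y ∈ K₂. -/

import Mathlib

/-- A Mealy machine with state set `Q`, input alphabet `A`, output alphabet `B`. -/
structure Mealy (Q A B : Type*) where
  step : Q → A → Q
  out  : Q → A → B

namespace Mealy

variable {Q A B : Type*}

/-- Extension of the transition function to finite words. -/
def stepW (M : Mealy Q A B) : Q → List A → Q
  | q, [] => q
  | q, a :: u => M.stepW (M.step q a) u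

/-- Extension of the output function to finite words. -/
def outW (M : Mealy Q A B) : Q → List A → List B
  | _, [] => []
  | q, a :: u => M.out q a :: M.outW (M.step q a) u

end Mealy

/-- The length-`n` prefix `x[0,n-1]` of an infinite word. -/
def wordPrefix {A : Type*} (x : ℕ → A) (n : ℕ) : List A :=
  List.ofFn (fun i : Fin n => x i)

/-- The initial machine `(M, q₀)` transforms the infinite word `x` to `y`. -/
def Mealy.Transforms {Q A B : Type*} (M : Mealy Q A B) (q₀ : Q)
    (x : ℕ → A) (y : ℕ → B) : Prop :=
  ∀ n, wordPrefix y n = M.outW q₀ (wordPrefix x n)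

/-- `w` occurs in the infinite word `x` at position `m`. -/
def IsFactorAt {A : Type*} (x : ℕ → A) (w : List A) (m : ℕ) : Prop :=
  w = List.ofFn (fun i : Fin w.length => x (m + i))

/-- `w` is a factor of the infinite word `x`. -/
def IsFactor {A : Type*} (x : ℕ → A) (w : List A) : Prop :=
  ∃ m, IsFactorAt x w m

/-- An infinite word is recurrent if every factor occurs infinitely often. -/
def Recurrent {A : Type*} (x : ℕ → A) : Prop :=
  ∀ w, IsFactor x w → ∀ N, ∃ m ≥ N, IsFactorAt x w m

/-- `x` is ultimately recurrent: some suffix of `x` is recurrent. -/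
def UltimatelyRecurrent {A : Type*} (x : ℕ → A) : Prop :=
  ∃ k, Recurrent (fun n => x (n + k))

/-- The infinite word `u v^ω`. -/
def upWord {A : Type*} (u v : List A) (hv : v ≠ []) : ℕ → A :=
  fun n =>
    if h : n < u.length then u.get ⟨n, h⟩
    else v.get ⟨(n - u.length) % v.length, Nat.mod_lt _ (List.length_pos_iff.mpr hv)⟩

/-- `x` is ultimately periodic: `x = u v^ω`. -/
def UltimatelyPeriodic {A : Type*} (x : ℕ → A) : Prop :=
  ∃ (u v : List A) (hv : v ≠ []), x = upWord u v hv

/-- The subword complexity `f_x(n)`: number of distinct length-`n` factors of `x`. -/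
noncomputable def complexity {A : Type*} (x : ℕ → A) (n : ℕ) : ℕ :=
  Set.ncard {w : List A | w.length = n ∧ IsFactor x w}

/-- The growth function `g_x(n) = ∑_{i=0}^n f_x(i)`. -/
noncomputable def growth {A : Type*} (x : ℕ → A) (n : ℕ) : ℕ :=
  ∑ i ∈ Finset.range (n + 1), complexity x i

/-- The series (cascade) composition of two Mealy machines. -/
def Mealy.series {Q₁ Q₂ A B₁ B₂ : Type*} (M₁ : Mealy Q₁ A B₁)
    (M₂ : Mealy Q₂ B₁ B₂) : Mealy (Q₁ × Q₂) A B₂ where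
  step := fun p a => (M₁.step p.1 a, M₂.step p.2 (M₁.out p.1 a))
  out  := fun p a => M₂.out p.2 (M₁.out p.1 a)

/-- An initial Mealy machine over the fixed countable alphabet ℕ:
finite state set `Fin k`, finite input and output alphabets `A, B ⊆ ℕ`. -/
structure MachineN where
  k : ℕ
  A : Finset ℕ
  B : Finset ℕ
  M : Mealy (Fin k) A B
  q₀ : Fin k

/-- `V` transforms the ℕ-valued infinite word `x` (which must be apt for `V`,
i.e. take values in `V.A`) to `y`. -/
def MachineN.TransformsN (V : MachineN) (x y : ℕ → ℕ) : Prop :=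
  ∃ (x' : ℕ → V.A) (y' : ℕ → V.B),
    (∀ n, (x' n : ℕ) = x n) ∧ (∀ n, (y' n : ℕ) = y n) ∧
    V.M.Transforms V.q₀ x' y'

/-- `x ⇀ y` : some initial Mealy machine transforms `x` to `y`. -/
def TransN (x y : ℕ → ℕ) : Prop := ∃ V : MachineN, V.TransformsN x y

/-- The set 𝔉 of all infinite words over finite subalphabets of ℕ. -/
def FWords : Set (ℕ → ℕ) := {x | (Set.range x).Finite}

/-- A nonempty set of infinite words is machine invariant if every initial
Mealy machine transforms all apt words of it into words of it. -/
def MachineInvariant (K : Set (ℕ → ℕ)) : Prop :=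
  K.Nonempty ∧ K ⊆ FWords ∧ ∀ x ∈ K, ∀ y, TransN x y → y ∈ K

/- ### Auxiliary lemmas -/

theorem Mealy.outW_append {Q A B : Type*} (M : Mealy Q A B) (q : Q) (s t : List A) :
    M.outW q (s ++ t) = M.outW q s ++ M.outW (M.stepW q s) t := by
  induction s generalizing q with
  | nil => simp [outW, stepW]
  | cons a s ih => simp [outW, stepW, ih]

theorem Mealy.length_outW {Q A B : Type*} (M : Mealy Q A B) (q : Q) (s : List A) :
    (M.outW q s).length = s.length := by
  induction s generalizing q with
  | nil => simp [outW]
  | cons a s ih => simp [outW, ih]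

theorem my_ncard_prod {α β : Type*} (s : Set α) (t : Set β) :
    (s ×ˢ t).ncard = s.ncard * t.ncard := by
  rw [← Nat.card_coe_set_eq, ← Nat.card_coe_set_eq, ← Nat.card_coe_set_eq,
    Nat.card_congr (Equiv.Set.prod s t), Nat.card_prod]

theorem wordPrefix_add {A : Type*} (x : ℕ → A) (m n : ℕ) :
    wordPrefix x (m + n) = wordPrefix x m ++ List.ofFn (fun i : Fin n => x (m + i)) := by
  unfold wordPrefix
  rw [List.ofFn_add]
  congr 1

theorem isFactorAt_ofFn {A : Type*} (x : ℕ → A) (m n : ℕ) :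
    IsFactorAt x (List.ofFn fun i : Fin n => x (m + i)) m := by
  simp only [IsFactorAt]
  apply List.ext_getElem <;> simp

theorem complexity_le_of_transforms
    {Q A B : Type*} [Fintype Q]
    (M : Mealy Q A B) (q₀ : Q) (x : ℕ → A) (y : ℕ → B) [Fintype A]
    (h : M.Transforms q₀ x y) (n : ℕ) :
    complexity y n ≤ Fintype.card Q * complexity x n := by
  classical
  set Sx : Set (List A) := {w | w.length = n ∧ IsFactor x w} with hSx
  set Sy : Set (List B) := {w | w.length = n ∧ IsFactor y w} with hSy
  have hfinx : Sx.Finite := (List.finite_length_eq A n).subset fun w hw => hw.1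
  have hsub : Sy ⊆ (fun p : Q × List A => M.outW p.1 p.2) '' ((Set.univ : Set Q) ×ˢ Sx) := by
    rintro w ⟨hlen, m, hm⟩
    subst hlen
    set u : List A := List.ofFn (fun i : Fin w.length => x (m + i)) with hu
    have hux : u ∈ Sx := by
      refine ⟨by simp [hu], m, ?_⟩
      rw [hu]; exact isFactorAt_ofFn x m w.length
    refine ⟨(M.stepW q₀ (wordPrefix x m), u), ⟨trivial, hux⟩, ?_⟩
    -- prefix decomposition
    have h1 : wordPrefix y (m + w.length) =
        M.outW q₀ (wordPrefix x m) ++ M.outW (M.stepW q₀ (wordPrefix x m)) u := by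
      rw [h (m + w.length), wordPrefix_add x m w.length, Mealy.outW_append]
    have h2 : wordPrefix y (m + w.length) =
        M.outW q₀ (wordPrefix x m) ++ List.ofFn (fun i : Fin w.length => y (m + i)) := by
      rw [wordPrefix_add y m w.length, h m]
    have h3 : List.ofFn (fun i : Fin w.length => y (m + i)) =
        M.outW (M.stepW q₀ (wordPrefix x m)) u :=
      List.append_cancel_left (h2 ▸ h1)
    exact (hm.trans h3).symm
  have hfin_img : ((fun p : Q × List A => M.outW p.1 p.2) ''
      ((Set.univ : Set Q) ×ˢ Sx)).Finite :=
    (Set.finite_univ.prod hfinx).image _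
  calc complexity y n = Sy.ncard := rfl
    _ ≤ ((fun p : Q × List A => M.outW p.1 p.2) '' ((Set.univ : Set Q) ×ˢ Sx)).ncard :=
        Set.ncard_le_ncard hsub hfin_img
    _ ≤ ((Set.univ : Set Q) ×ˢ Sx).ncard := Set.ncard_image_le (Set.finite_univ.prod hfinx)
    _ = (Set.univ : Set Q).ncard * Sx.ncard := my_ncard_prod _ _
    _ = Fintype.card Q * complexity x n := by
        rw [Set.ncard_univ, Nat.card_eq_fintype_card]; rfl

/-- the class of infinite words with growth function `O(f)`
is machine invariant. -/
theorem growth_bigO_invariant (f : ℕ → ℝ)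
    {Q A B : Type*} [Fintype Q] [Fintype A] [Fintype B]
    (M : Mealy Q A B) (q₀ : Q) (x : ℕ → A) (y : ℕ → B)
    (h : M.Transforms q₀ x y)
    (hx : ∃ c > (0 : ℝ), ∀ n, (growth x n : ℝ) ≤ c * |f n|) :
    ∃ c > (0 : ℝ), ∀ n, (growth y n : ℝ) ≤ c * |f n| := by
  obtain ⟨c, hc, hbd⟩ := hx
  have hQ : (0 : ℕ) < Fintype.card Q := @Fintype.card_pos _ _ ⟨q₀⟩
  refine ⟨(Fintype.card Q : ℝ) * c, by positivity, fun n => ?_⟩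
  have hg : growth y n ≤ Fintype.card Q * growth x n := by
    unfold growth
    rw [Finset.mul_sum]
    exact Finset.sum_le_sum fun i _ => complexity_le_of_transforms M q₀ x y h i
  calc (growth y n : ℝ) ≤ (Fintype.card Q : ℝ) * (growth x n : ℝ) := by
        exact_mod_cast hg
    _ ≤ (Fintype.card Q : ℝ) * (c * |f n|) := by
        exact mul_le_mul_of_nonneg_left (hbd n) (by positivity)
    _ = (Fintype.card Q : ℝ) * c * |f n| := by ring
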